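/- Reading the transposition labels of a maximal chain of NC_n from bottom to top gives a factorization of the n-cycle (1, 2, …, n) as a product of n − 1 transpositions, and this correspondence is a bijection between the maximal chains σ_0 ⋖ σ_1 ⋖ ⋯ ⋖ σ_{n−1} of NC_n (with labels t_i = π(σ_{i−1})⁻¹π(σ_i)) and the factorizations of (1, 2, …, n) as an ordered product of n − 1 transpositions. -/

import Mathlib

/-- A partition of `[n]` (encoded as an equivalence relation / setoid on `Fin n`)
is *noncrossing* if there are no elements `a < b < c < d` with `a` and `c` in one
block and `b` and `d` in a different block. -/
def IsNoncrossing {n : ℕ} (σ : Setoid (Fin n)) : Prop :=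
  ∀ a b c d : Fin n, a < b → b < c → c < d → σ a c → σ b d → σ a b

/-- The noncrossing partition lattice `NC_n`, ordered by refinement. -/
abbrev NC (n : ℕ) := {σ : Setoid (Fin n) // IsNoncrossing σ}

/-- The discrete partition (every block a singleton), as an element of `NC_n`. -/
def discNC (n : ℕ) : NC n :=
  ⟨⟨Eq, eq_equivalence⟩, by
    intro a b c d hab hbc hcd hac _
    exact absurd hac (ne_of_lt (hab.trans hbc))⟩

/-- The partition with the single block `[n]`, as an element of `NC_n`. -/
def fullNC (n : ℕ) : NC n :=
  ⟨⟨fun _ _ => True, ⟨fun _ => trivial, fun _ => trivial, fun _ _ => trivial⟩⟩,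
    fun _ _ _ _ _ _ _ _ _ => trivial⟩

/-- `p` is the permutation `π(σ)` associated to the partition `σ`: each block of `σ`
is a cycle of `p`, cycled in increasing order. -/
def IsPiPerm {n : ℕ} (σ : Setoid (Fin n)) (p : Equiv.Perm (Fin n)) : Prop :=
  ∀ x : Fin n,
    σ x (p x) ∧
    ((∃ y, σ x y ∧ x < y) → (x < p x ∧ ∀ y, σ x y → x < y → p x ≤ y)) ∧
    ((∀ y, σ x y → y ≤ x) → ∀ y, σ x y → p x ≤ y)

open Equiv Equiv.Perm

section basics
variable {n : ℕ} {σ τ : Setoid (Fin n)} {p q : Equiv.Perm (Fin n)}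

theorem piPerm_unique (hp : IsPiPerm σ p) (hq : IsPiPerm σ q) : p = q := by
  ext x
  obtain ⟨hp1, hp2, hp3⟩ := hp x
  obtain ⟨hq1, hq2, hq3⟩ := hq x
  by_cases h : ∃ y, σ x y ∧ x < y
  · obtain ⟨hplt, hpmin⟩ := hp2 h
    obtain ⟨hqlt, hqmin⟩ := hq2 h
    exact congrArg Fin.val (le_antisymm (hpmin _ hq1 hqlt) (hqmin _ hp1 hplt))
  · push_neg at h
    exact congrArg Fin.val (le_antisymm (hp3 h _ hq1) (hq3 h _ hp1))

theorem piPerm_sameCycle (hp : IsPiPerm σ p) {x y : Fin n} :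
    σ x y ↔ p.SameCycle x y := by
  constructor
  · intro hxy
    classical
    set B : Finset (Fin n) := Finset.univ.filter (fun z => σ x z) with hB
    have hmemB : ∀ z, z ∈ B ↔ σ x z := by
      intro z; simp [hB]
    have hBne : B.Nonempty := ⟨x, (hmemB x).2 (σ.refl x)⟩
    set m := B.min' hBne with hm
    have key : ∀ k : ℕ, ∀ z : Fin n, σ x z → z.val ≤ k → p.SameCycle m z := by
      intro k
      induction k with
      | zero =>
        intro z hz hzk
        have h1 : m ≤ z := B.min'_le z ((hmemB z).2 hz)
        have h2 : z ≤ m := by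
          have : z.val = 0 := Nat.le_zero.1 hzk
          exact le_of_le_of_eq (Fin.le_def.2 (by omega)) rfl
        have : z = m := le_antisymm h2 h1
        exact this ▸ Equiv.Perm.SameCycle.refl p m
      | succ k ih =>
        intro z hz hzk
        by_cases hzm : z = m
        · exact hzm ▸ Equiv.Perm.SameCycle.refl p m
        have hmz : m < z := lt_of_le_of_ne (B.min'_le z ((hmemB z).2 hz)) (Ne.symm hzm)
        set S : Finset (Fin n) := B.filter (fun w => w < z) with hS
        have hSne : S.Nonempty := ⟨m, by
          simp only [hS, Finset.mem_filter]
          exact ⟨B.min'_mem hBne, hmz⟩⟩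
        set w := S.max' hSne with hw
        have hwS := S.max'_mem hSne
        have hwB : σ x w := (hmemB w).1 (Finset.mem_filter.1 hwS).1
        have hwz : w < z := (Finset.mem_filter.1 hwS).2
        have hσwz : σ w z := σ.trans (σ.symm hwB) hz
        obtain ⟨hlt, hmin⟩ := (hp w).2.1 ⟨z, hσwz, hwz⟩
        have hpw : p w = z := by
          refine le_antisymm (hmin z hσwz hwz) ?_
          by_contra hcon
          push_neg at hcon
          have hpwS : p w ∈ S := by
            simp only [hS, Finset.mem_filter]
            exact ⟨(hmemB _).2 (σ.trans hwB (hp w).1), hcon⟩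
          exact absurd (S.le_max' _ hpwS) (not_le.2 hlt)
        have hc1 : p.SameCycle m w := ih w hwB (by
          have := Fin.lt_def.1 hwz; omega)
        exact hc1.trans ⟨1, by simpa using hpw⟩
    have hx : p.SameCycle m x := key n x (σ.refl x) (Nat.le_of_lt x.isLt)
    have hy : p.SameCycle m y := key n y hxy (Nat.le_of_lt y.isLt)
    exact hx.symm.trans hy
  · intro h
    obtain ⟨k, -, hk⟩ := h.exists_pow_eq'
    subst hk
    clear h
    induction k with
    | zero => exact σ.refl x
    | succ k ih =>
      have : (p ^ (k+1)) x = p ((p ^ k) x) := by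
        rw [pow_succ' p k]; rfl
      rw [this]
      exact σ.trans ih (hp ((p ^ k) x)).1

theorem piPerm_inj (hp : IsPiPerm σ p) (hq : IsPiPerm τ p) : σ = τ := by
  ext x y
  rw [piPerm_sameCycle hp, piPerm_sameCycle hq]

end basics

theorem isPiPerm_disc : IsPiPerm (discNC n).val 1 := by
  intro x
  refine ⟨rfl, fun ⟨y, hy, hlt⟩ => absurd hy (ne_of_lt hlt), fun _ y hy => hy ▸ le_refl _⟩

theorem eq_disc_of_piPerm_one {σ : NC n} (hp : IsPiPerm σ.val 1) : σ = discNC n :=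
  Subtype.ext (piPerm_inj hp isPiPerm_disc)

theorem isPiPerm_full : IsPiPerm (fullNC n).val (finRotate n) := by
  intro x
  match n, x with
  | (m+1), x =>
  refine ⟨trivial, ?_, ?_⟩
  · rintro ⟨y, -, hy⟩
    have hxm : x < Fin.last m := lt_of_lt_of_le hy (Fin.le_last y)
    have hval : ((x + 1 : Fin (m+1))).val = x.val + 1 := Fin.val_add_one_of_lt hxm
    rw [finRotate_succ_apply]
    constructor
    · rw [Fin.lt_def, hval]; omega
    · intro y _ hxy
      rw [Fin.le_def, hval]
      exact Fin.lt_def.1 hxy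
  · intro h y _
    have hx : x = Fin.last m := le_antisymm (Fin.le_last x) (h (Fin.last m) trivial)
    rw [hx, finRotate_last]
    exact Fin.zero_le y

theorem eq_full_of_piPerm_finRotate {σ : NC n} (hp : IsPiPerm σ.val (finRotate n)) :
    σ = fullNC n :=
  Subtype.ext (piPerm_inj hp isPiPerm_full)

section split
variable {n : ℕ} (σ : Setoid (Fin n)) (u v : Fin n)

/-- membership in the "upper part" of the split of the block of `u` at `(u,v]`. -/
def SplitIn (x : Fin n) : Prop := σ u x ∧ u < x ∧ x ≤ v

def splitSetoid : Setoid (Fin n) :=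
  ⟨fun x y => σ x y ∧ (SplitIn σ u v x ↔ SplitIn σ u v y),
    ⟨fun x => ⟨σ.refl x, Iff.rfl⟩,
     fun h => ⟨σ.symm h.1, h.2.symm⟩,
     fun h h' => ⟨σ.trans h.1 h'.1, h.2.trans h'.2⟩⟩⟩

variable {σ u v}

theorem splitSetoid_rel {x y : Fin n} :
    splitSetoid σ u v x y ↔ σ x y ∧ (SplitIn σ u v x ↔ SplitIn σ u v y) :=
  Iff.rfl

theorem splitIn_v (huv : u < v) (hσuv : σ u v) : SplitIn σ u v v :=
  ⟨hσuv, huv, le_refl v⟩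

theorem not_splitIn_u : ¬ SplitIn σ u v u := fun h => lt_irrefl u h.2.1

theorem splitSetoid_le {x y : Fin n} (h : splitSetoid σ u v x y) : σ x y := h.1

theorem splitSetoid_noncrossing (hσ : IsNoncrossing σ) :
    IsNoncrossing (splitSetoid σ u v) := by
  intro a b c d hab hbc hcd hac hbd
  obtain ⟨hac', hacIn⟩ := splitSetoid_rel.1 hac
  obtain ⟨hbd', hbdIn⟩ := splitSetoid_rel.1 hbd
  have hab' : σ a b := hσ a b c d hab hbc hcd hac' hbd'
  refine splitSetoid_rel.2 ⟨hab', ?_⟩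
  constructor
  · rintro ⟨hua, hult, halt⟩
    have hIc := hacIn.1 ⟨hua, hult, halt⟩
    exact ⟨σ.trans hua hab', lt_trans hult hab, le_trans (le_of_lt hbc) hIc.2.2⟩
  · rintro ⟨hub, hult, hblt⟩
    by_contra hIa
    have hId : SplitIn σ u v d := hbdIn.1 ⟨hub, hult, hblt⟩
    have hIc : ¬ SplitIn σ u v c := fun h => hIa (hacIn.2 h)
    -- a ≤ u
    have hau : a ≤ u := by
      by_contra hcon
      push_neg at hcon
      exact hIa ⟨σ.trans hub (σ.symm hab'), hcon, le_trans (le_of_lt hab) hblt⟩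
    rcases eq_or_lt_of_le hau with heq | hlt
    · exact hIc ⟨heq ▸ hac', lt_trans hult hbc, le_trans (le_of_lt hcd) hId.2.2⟩
    · -- a < u < b < c < d, σ a c, σ u d ⇒ σ a u ⇒ σ u c, contradiction
      have hσud : σ u d := σ.trans hub hbd'
      have hau' : σ a u := hσ a u c d hlt (lt_trans hult hbc) hcd hac' hσud
      exact hIc ⟨σ.trans (σ.symm hau') hac', lt_trans hult hbc,
        le_trans (le_of_lt hcd) hId.2.2⟩

end split

theorem isPiPerm_split {n : ℕ} {σ : Setoid (Fin n)} {p : Equiv.Perm (Fin n)}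
    (hp : IsPiPerm σ p) {u v : Fin n} (huv : u < v) (hσuv : σ u v) :
    IsPiPerm (splitSetoid σ u v) (p * Equiv.swap u v) := by
  intro x
  rcases eq_or_ne x u with rfl | hxu
  · -- x = u
    have happ : (p * Equiv.swap x v) x = p v := by
      simp [Equiv.Perm.mul_apply]
    rw [happ]
    by_cases hbig : ∃ y, σ x y ∧ v < y
    · obtain ⟨y₀, hy₀, hvy₀⟩ := hbig
      obtain ⟨hvlt, hvmin⟩ := (hp v).2.1 ⟨y₀, σ.trans (σ.symm hσuv) hy₀, hvy₀⟩
      have hc1 : splitSetoid σ x v x (p v) :=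
        ⟨σ.trans hσuv (hp v).1,
          iff_of_false not_splitIn_u (fun h => absurd h.2.2 (not_le.2 hvlt))⟩
      refine ⟨hc1, ?_, ?_⟩
      · intro _
        refine ⟨lt_trans huv hvlt, ?_⟩
        intro y hy hlt
        have hInY : ¬ SplitIn σ x v y := fun h => not_splitIn_u (hy.2.2 h)
        have hvlty : v < y := lt_of_not_ge (fun hle => hInY ⟨hy.1, hlt, hle⟩)
        exact hvmin y (σ.trans (σ.symm hσuv) hy.1) hvlty
      · intro h
        exact absurd (h (p v) hc1) (not_le.2 (lt_trans huv hvlt))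
    · push_neg at hbig
      have hmaxv : ∀ y, σ v y → y ≤ v := fun y hy => hbig y (σ.trans hσuv hy)
      have hpv := (hp v).2.2 hmaxv
      have hpvu : p v ≤ x := hpv x (σ.symm hσuv)
      have hc1 : splitSetoid σ x v x (p v) :=
        ⟨σ.trans hσuv (hp v).1,
          iff_of_false not_splitIn_u (fun h => absurd h.2.1 (not_lt.2 hpvu))⟩
      refine ⟨hc1, ?_, ?_⟩
      · rintro ⟨y, hy, hlt⟩
        exfalso
        have hInY : ¬ SplitIn σ x v y := fun h => not_splitIn_u (hy.2.2 h)
        exact hInY ⟨hy.1, hlt, hbig y hy.1⟩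
      · intro _ y hy
        exact hpv y (σ.trans (σ.symm hσuv) hy.1)
  rcases eq_or_ne x v with rfl | hxv
  · -- x = v
    have happ : (p * Equiv.swap u x) x = p u := by
      simp [Equiv.Perm.mul_apply]
    rw [happ]
    obtain ⟨hpu1, hpu2⟩ := (hp u).2.1 ⟨x, hσuv, huv⟩
    have hpuv : p u ≤ x := hpu2 x hσuv huv
    have hInpu : SplitIn σ u x (p u) := ⟨(hp u).1, hpu1, hpuv⟩
    refine ⟨⟨σ.trans (σ.symm hσuv) (hp u).1,
      iff_of_true (splitIn_v huv hσuv) hInpu⟩, ?_, ?_⟩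
    · rintro ⟨y, hy, hlt⟩
      exact absurd (hy.2.1 (splitIn_v huv hσuv)).2.2 (not_le.2 hlt)
    · intro _ y hy
      have hIy := hy.2.1 (splitIn_v huv hσuv)
      exact hpu2 y hIy.1 hIy.2.1
  -- x ∉ {u, v}
  have happ : (p * Equiv.swap u v) x = p x := by
    rw [Equiv.Perm.mul_apply, Equiv.swap_apply_of_ne_of_ne hxu hxv]
  rw [happ]
  by_cases hIn : SplitIn σ u v x
  · -- x in the upper part, x ≠ v so x < v
    obtain ⟨hux, hult, hxle⟩ := hIn
    have hxv' : x < v := lt_of_le_of_ne hxle hxv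
    have hσxv : σ x v := σ.trans (σ.symm hux) hσuv
    obtain ⟨h21, h22⟩ := (hp x).2.1 ⟨v, hσxv, hxv'⟩
    have hpxv : p x ≤ v := h22 v hσxv hxv'
    have hInpx : SplitIn σ u v (p x) :=
      ⟨σ.trans hux (hp x).1, lt_trans hult h21, hpxv⟩
    refine ⟨⟨(hp x).1, iff_of_true ⟨hux, hult, hxle⟩ hInpx⟩, ?_, ?_⟩
    · intro _
      exact ⟨h21, fun y hy hlt => h22 y hy.1 hlt⟩
    · intro h
      exact absurd (h v ⟨hσxv, iff_of_true ⟨hux, hult, hxle⟩ (splitIn_v huv hσuv)⟩)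
        (not_le.2 hxv')
  · by_cases hux : σ u x
    · -- x in the block but in the lower part: x < u or v < x
      have hcase : x < u ∨ v < x := by
        rcases lt_trichotomy x u with h | h | h
        · exact Or.inl h
        · exact absurd h hxu
        · right
          by_contra hcon
          push_neg at hcon
          exact hIn ⟨hux, h, hcon⟩
      rcases hcase with hxu' | hvx
      · -- x < u
        obtain ⟨h21, h22⟩ := (hp x).2.1 ⟨u, σ.symm hux, hxu'⟩
        have hpxu : p x ≤ u := h22 u (σ.symm hux) hxu'
        refine ⟨⟨(hp x).1,
          iff_of_false hIn (fun h => absurd h.2.1 (not_lt.2 hpxu))⟩, ?_, ?_⟩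
        · intro _
          exact ⟨h21, fun y hy hlt => h22 y hy.1 hlt⟩
        · intro h
          exact absurd (h u ⟨σ.symm hux, iff_of_false hIn not_splitIn_u⟩)
            (not_le.2 hxu')
      · -- v < x
        by_cases hbig : ∃ y, σ x y ∧ x < y
        · obtain ⟨h21, h22⟩ := (hp x).2.1 hbig
          have hnpx : ¬ SplitIn σ u v (p x) :=
            fun h => absurd h.2.2 (not_le.2 (lt_trans hvx h21))
          refine ⟨⟨(hp x).1, iff_of_false hIn hnpx⟩, ?_, ?_⟩
          · intro _
            exact ⟨h21, fun y hy hlt => h22 y hy.1 hlt⟩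
          · intro h
            exact absurd (h (p x) ⟨(hp x).1, iff_of_false hIn hnpx⟩) (not_le.2 h21)
        · push_neg at hbig
          have h3 := (hp x).2.2 hbig
          have hpxu : p x ≤ u := h3 u (σ.symm hux)
          refine ⟨⟨(hp x).1,
            iff_of_false hIn (fun h => absurd h.2.1 (not_lt.2 hpxu))⟩, ?_, ?_⟩
          · rintro ⟨y, hy, hlt⟩
            exact absurd (hbig y hy.1) (not_le.2 hlt)
          · intro _ y hy
            exact h3 y hy.1
    · -- x not in the block of u
      have hdisj : ∀ y, σ x y → ¬ SplitIn σ u v y :=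
        fun y hy h => hux (σ.trans h.1 (σ.symm hy))
      by_cases hbig : ∃ y, σ x y ∧ x < y
      · obtain ⟨h21, h22⟩ := (hp x).2.1 hbig
        refine ⟨⟨(hp x).1, iff_of_false hIn (hdisj _ (hp x).1)⟩, ?_, ?_⟩
        · intro _
          exact ⟨h21, fun y hy hlt => h22 y hy.1 hlt⟩
        · intro h
          obtain ⟨y₀, hy₀, hlt₀⟩ := hbig
          exact absurd (h y₀ ⟨hy₀, iff_of_false hIn (hdisj _ hy₀)⟩) (not_le.2 hlt₀)
      · push_neg at hbig
        have h3 := (hp x).2.2 hbig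
        refine ⟨⟨(hp x).1, iff_of_false hIn (hdisj _ (hp x).1)⟩, ?_, ?_⟩
        · rintro ⟨y, hy, hlt⟩
          exact absurd (hbig y hy.1) (not_le.2 hlt)
        · intro _ y hy
          exact h3 y hy.1

theorem splitSetoid_merge {n : ℕ} {σ : Setoid (Fin n)} {u v : Fin n}
    (huv : u < v) (hσuv : σ u v) {x y : Fin n} :
    σ x y ↔ (splitSetoid σ u v x y ∨
      (splitSetoid σ u v x u ∧ splitSetoid σ u v v y) ∨
      (splitSetoid σ u v x v ∧ splitSetoid σ u v u y)) := by
  constructor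
  · intro h
    by_cases hx : SplitIn σ u v x <;> by_cases hy : SplitIn σ u v y
    · exact Or.inl ⟨h, iff_of_true hx hy⟩
    · refine Or.inr (Or.inr ⟨⟨σ.trans (σ.symm hx.1) hσuv, iff_of_true hx (splitIn_v huv hσuv)⟩,
        ⟨σ.trans hx.1 h, iff_of_false not_splitIn_u hy⟩⟩)
    · refine Or.inr (Or.inl ⟨⟨σ.trans h (σ.symm hy.1), iff_of_false hx not_splitIn_u⟩,
        ⟨σ.trans (σ.symm hσuv) hy.1, iff_of_true (splitIn_v huv hσuv) hy⟩⟩)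
    · exact Or.inl ⟨h, iff_of_false hx hy⟩
  · rintro (h | ⟨h1, h2⟩ | ⟨h1, h2⟩)
    · exact h.1
    · exact σ.trans h1.1 (σ.trans hσuv h2.1)
    · exact σ.trans h1.1 (σ.trans (σ.symm hσuv) h2.1)

theorem split_covBy {n : ℕ} {μ ν : NC n} {u v : Fin n} (huv : u < v) (hσuv : ν.val u v)
    (hμ : μ.val = splitSetoid ν.val u v) : μ ⋖ ν := by
  have hle : μ ≤ ν := by
    rw [Subtype.coe_le_coe.symm ] at *
    rw [hμ]
    exact Setoid.le_def.2 (fun h => h.1)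
  have hne : μ ≠ ν := by
    intro h
    have : ν.val u v → splitSetoid ν.val u v u v := by
      rw [← hμ, h]; exact id
    exact (this hσuv).2.2 (splitIn_v huv hσuv) |>.2.1.false
  constructor
  · exact lt_of_le_of_ne hle hne
  · intro ρ hμρ hρν
    by_cases hr : ρ.val u v
    · -- then ν ≤ ρ
      refine absurd ?_ (not_le_of_gt hρν)
      have : ν.val ≤ ρ.val := by
        refine Setoid.le_def.2 ?_
        intro x y h
        rcases (splitSetoid_merge huv hσuv).1 h with h' | ⟨h1, h2⟩ | ⟨h1, h2⟩
        · exact Setoid.le_def.1 (Subtype.coe_le_coe.2 hμρ.le) (hμ ▸ h')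
        · have r1 := Setoid.le_def.1 (Subtype.coe_le_coe.2 hμρ.le) (hμ ▸ h1)
          have r2 := Setoid.le_def.1 (Subtype.coe_le_coe.2 hμρ.le) (hμ ▸ h2)
          exact ρ.val.trans r1 (ρ.val.trans hr r2)
        · have r1 := Setoid.le_def.1 (Subtype.coe_le_coe.2 hμρ.le) (hμ ▸ h1)
          have r2 := Setoid.le_def.1 (Subtype.coe_le_coe.2 hμρ.le) (hμ ▸ h2)
          exact ρ.val.trans r1 (ρ.val.trans (ρ.val.symm hr) r2)
      exact Subtype.coe_le_coe.1 this
    · -- then ρ ≤ μ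
      refine absurd ?_ (not_le_of_gt hμρ)
      have : ρ.val ≤ μ.val := by
        refine Setoid.le_def.2 ?_
        intro x y h
        have hσxy : ν.val x y := Setoid.le_def.1 (Subtype.coe_le_coe.2 hρν.le) h
        rcases (splitSetoid_merge huv hσuv).1 hσxy with h' | ⟨h1, h2⟩ | ⟨h1, h2⟩
        · exact hμ ▸ h'
        · exfalso
          have r1 : ρ.val x u := Setoid.le_def.1 (Subtype.coe_le_coe.2 hμρ.le) (hμ ▸ h1)
          have r2 : ρ.val v y := Setoid.le_def.1 (Subtype.coe_le_coe.2 hμρ.le) (hμ ▸ h2)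
          exact hr (ρ.val.trans (ρ.val.symm r1) (ρ.val.trans h (ρ.val.symm r2)))
        · exfalso
          have r1 : ρ.val x v := Setoid.le_def.1 (Subtype.coe_le_coe.2 hμρ.le) (hμ ▸ h1)
          have r2 : ρ.val u y := Setoid.le_def.1 (Subtype.coe_le_coe.2 hμρ.le) (hμ ▸ h2)
          exact hr (ρ.val.trans r2 (ρ.val.trans (ρ.val.symm h) r1))
      exact Subtype.coe_le_coe.1 this

theorem covBy_split {n : ℕ} {μ ν : NC n} (hcov : μ ⋖ ν) :
    ∃ u v, u < v ∧ ν.val u v ∧ μ.val = splitSetoid ν.val u v := by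
  classical
  have hlt := hcov.lt
  have hleμν : ∀ {z w}, μ.val z w → ν.val z w :=
    fun h => Setoid.le_def.1 (Subtype.coe_le_coe.2 hlt.le) h
  have hne : μ.val ≠ ν.val := fun h => hlt.ne (Subtype.ext h)
  have hxy : ∃ x y, ν.val x y ∧ ¬ μ.val x y := by
    by_contra hcon
    push_neg at hcon
    exact hne (le_antisymm (Subtype.coe_le_coe.2 hlt.le)
      (Setoid.le_def.2 (fun {z w} h => hcon z w h)))
  obtain ⟨x, y, hνxy, hμxy⟩ := hxy
  set B : Finset (Fin n) := Finset.univ.filter (fun z => ν.val x z) with hBdef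
  have hmemB : ∀ z, z ∈ B ↔ ν.val x z := fun z => by simp [hBdef]
  have hBx : x ∈ B := (hmemB x).2 (ν.val.refl x)
  have hBy : y ∈ B := (hmemB y).2 hνxy
  set mB := B.min' ⟨x, hBx⟩ with hmBdef
  have hmBB : mB ∈ B := B.min'_mem _
  -- blocks of μ
  have hblkne : ∀ z : Fin n, (Finset.univ.filter (fun w => μ.val z w)).Nonempty :=
    fun z => ⟨z, Finset.mem_filter.2 ⟨Finset.mem_univ z, μ.val.refl z⟩⟩
  set blk : Fin n → Finset (Fin n) := fun z => Finset.univ.filter (fun w => μ.val z w)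
    with hblkdef
  have hmemblk : ∀ z w, w ∈ blk z ↔ μ.val z w := fun z w => by simp [hblkdef]
  set f : Fin n → ℕ :=
    fun z => ((blk z).max' (hblkne z)).val - ((blk z).min' (hblkne z)).val with hfdef
  set T := B.filter (fun z => ¬ μ.val mB z) with hTdef
  have hmemT : ∀ z, z ∈ T ↔ z ∈ B ∧ ¬ μ.val mB z := fun z => by simp [hTdef]
  have hTne : T.Nonempty := by
    by_cases hx0 : μ.val mB x
    · refine ⟨y, (hmemT y).2 ⟨hBy, fun h => hμxy (μ.val.trans (μ.val.symm hx0) h)⟩⟩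
    · exact ⟨x, (hmemT x).2 ⟨hBx, hx0⟩⟩
  obtain ⟨z₀, hz₀T, hz₀min⟩ := T.exists_min_image f hTne
  obtain ⟨hz₀B, hmBz₀⟩ := (hmemT z₀).1 hz₀T
  set a := ((blk z₀).min' (hblkne z₀)) with hadef
  set b := ((blk z₀).max' (hblkne z₀)) with hbdef
  have haC : μ.val z₀ a := (hmemblk _ _).1 ((blk z₀).min'_mem _)
  have hbC : μ.val z₀ b := (hmemblk _ _).1 ((blk z₀).max'_mem _)
  have hCsubB : ∀ w, μ.val z₀ w → w ∈ B :=
    fun w h => (hmemB w).2 (ν.val.trans ((hmemB z₀).1 hz₀B) (hleμν h))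
  have hab : a ≤ b := (blk z₀).min'_le _ ((blk z₀).max'_mem _)
  have hmBa : mB < a := by
    refine lt_of_le_of_ne (B.min'_le _ (hCsubB a haC)) (fun h => hmBz₀ ?_)
    exact μ.val.symm (h ▸ haC)
  have hconvex : ∀ w ∈ B, a ≤ w → w ≤ b → μ.val z₀ w := by
    intro w hwB haw hwb
    by_contra hw
    have haw' : a < w := lt_of_le_of_ne haw (fun h => hw (by rw [← h]; exact haC))
    have hwb' : w < b := lt_of_le_of_ne hwb (fun h => hw (by rw [h]; exact hbC))
    set dmin := ((blk w).min' (hblkne w)) with hdmindef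
    set dmax := ((blk w).max' (hblkne w)) with hdmaxdef
    have hdminD : μ.val w dmin := (hmemblk _ _).1 ((blk w).min'_mem _)
    have hdmaxD : μ.val w dmax := (hmemblk _ _).1 ((blk w).max'_mem _)
    have hdd : dmin ≤ dmax := (blk w).min'_le _ ((blk w).max'_mem _)
    have hμab : μ.val a b := μ.val.trans (μ.val.symm haC) hbC
    have hdmaxb : dmax < b := by
      have h1 : dmax ≠ b := fun h =>
        hw (μ.val.trans hbC (μ.val.symm (by rw [← h]; exact hdmaxD)))
      refine lt_of_le_of_ne ?_ h1
      by_contra hcon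
      push_neg at hcon
      have hcross := μ.prop a w b dmax haw' hwb' hcon hμab hdmaxD
      exact hw (μ.val.trans haC hcross)
    have hadmin : a < dmin := by
      have h1 : dmin ≠ a := fun h =>
        hw (μ.val.trans haC (μ.val.symm (by rw [← h]; exact hdminD)))
      refine lt_of_le_of_ne ?_ (Ne.symm h1)
      by_contra hcon
      push_neg at hcon
      have hcross := μ.prop dmin a w b hcon haw' hwb'
        (μ.val.symm hdminD) hμab
      exact hw (μ.val.trans haC (μ.val.symm (μ.val.trans hdminD hcross)))
    have hwT : w ∈ T := by
      refine (hmemT w).2 ⟨hwB, fun h => ?_⟩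
      have hmBD : mB ∈ blk w := (hmemblk _ _).2 (μ.val.symm h)
      have : dmin ≤ mB := (blk w).min'_le _ hmBD
      exact absurd (lt_of_lt_of_le (lt_trans hmBa hadmin) this) (lt_irrefl mB)
    have hflt : f w < f z₀ := by
      have e1 : f w = dmax.val - dmin.val := rfl
      have e2 : f z₀ = b.val - a.val := rfl
      rw [e1, e2]
      have l1 : dmax.val < b.val := hdmaxb
      have l2 : a.val < dmin.val := hadmin
      have l3 : dmin.val ≤ dmax.val := hdd
      have l4 : a.val ≤ b.val := hab
      omega
    exact absurd (hz₀min w hwT) (not_le.2 hflt)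
  -- define u and v
  set S := B.filter (fun z => z < a) with hSdef
  have hSne : S.Nonempty := ⟨mB, by
    simp only [hSdef, Finset.mem_filter]
    exact ⟨hmBB, hmBa⟩⟩
  set u := S.max' hSne with hudef
  have huS := S.max'_mem hSne
  have huB : u ∈ B := (Finset.mem_filter.1 huS).1
  have hua : u < a := (Finset.mem_filter.1 huS).2
  have hbB : b ∈ B := hCsubB b hbC
  have huv : u < b := lt_of_lt_of_le hua hab
  have hνub : ν.val u b := ν.val.trans (ν.val.symm ((hmemB u).1 huB)) ((hmemB b).1 hbB)
  have hInC : ∀ z, SplitIn ν.val u b z ↔ μ.val z₀ z := by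
    intro z
    constructor
    · rintro ⟨hνuz, hulz, hzb⟩
      have hzB : z ∈ B := (hmemB z).2 (ν.val.trans ((hmemB u).1 huB) hνuz)
      have haz : a ≤ z := by
        by_contra hcon
        push_neg at hcon
        have hzS : z ∈ S := by
          simp only [hSdef, Finset.mem_filter]; exact ⟨hzB, hcon⟩
        exact absurd (lt_of_le_of_lt (S.le_max' z hzS) hulz) (lt_irrefl z)
      exact hconvex z hzB haz hzb
    · intro h
      have hzB : z ∈ B := hCsubB z h
      refine ⟨ν.val.trans (ν.val.symm ((hmemB u).1 huB)) ((hmemB z).1 hzB), ?_, ?_⟩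
      · exact lt_of_lt_of_le hua ((blk z₀).min'_le z ((hmemblk _ _).2 h))
      · exact (blk z₀).le_max' z ((hmemblk _ _).2 h)
  have hμle : μ.val ≤ splitSetoid ν.val u b := by
    refine Setoid.le_def.2 ?_
    intro z w h
    refine ⟨hleμν h, ?_⟩
    rw [hInC z, hInC w]
    exact ⟨fun hh => μ.val.trans hh h, fun hh => μ.val.trans hh (μ.val.symm h)⟩
  set s : NC n := ⟨splitSetoid ν.val u b, splitSetoid_noncrossing ν.prop⟩ with hsdef
  have hsν : s < ν := by
    refine lt_of_le_of_ne (Subtype.coe_le_coe.1 (Setoid.le_def.2 (fun h => h.1))) ?_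
    intro h
    have hs : splitSetoid ν.val u b u b := by
      have : s.val u b := by rw [h]; exact hνub
      exact this
    exact not_splitIn_u (hs.2.2 (splitIn_v huv hνub))
  have hμs : μ = s := by
    by_contra hne2
    exact hcov.2 (lt_of_le_of_ne (Subtype.coe_le_coe.1 hμle) hne2) hsν
  exact ⟨u, b, huv, hνub, congrArg Subtype.val hμs⟩

section counting
variable {n : ℕ}

def cycleSetoid (p : Equiv.Perm (Fin n)) : Setoid (Fin n) :=
  ⟨p.SameCycle, ⟨Equiv.Perm.SameCycle.refl p, Equiv.Perm.SameCycle.symm,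
    Equiv.Perm.SameCycle.trans⟩⟩

theorem cycleSetoid_rel {p : Equiv.Perm (Fin n)} {x y : Fin n} :
    cycleSetoid p x y ↔ p.SameCycle x y := Iff.rfl

noncomputable def nOrb (p : Equiv.Perm (Fin n)) : ℕ := Nat.card (Quotient (cycleSetoid p))

theorem nOrb_mono {p q : Equiv.Perm (Fin n)} (h : cycleSetoid p ≤ cycleSetoid q) :
    nOrb q ≤ nOrb p := by
  have : Function.Surjective
      (Quotient.lift (fun x => (Quotient.mk (cycleSetoid q) x))
        (fun a b hab => Quotient.sound (Setoid.le_def.1 h hab)) :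
        Quotient (cycleSetoid p) → Quotient (cycleSetoid q)) := by
    intro b
    induction b using Quotient.ind
    exact ⟨Quotient.mk _ _, rfl⟩
  exact Nat.card_le_card_of_surjective _ this

/-- The join of a setoid with identification of `u` and `v`. -/
def joinPair (σ : Setoid (Fin n)) (u v : Fin n) : Setoid (Fin n) :=
  ⟨fun x y => σ x y ∨ (σ x u ∧ σ v y) ∨ (σ x v ∧ σ u y),
   ⟨fun x => Or.inl (σ.refl x),
    fun h => by
      rcases h with h | ⟨h1, h2⟩ | ⟨h1, h2⟩
      · exact Or.inl (σ.symm h)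
      · exact Or.inr (Or.inr ⟨σ.symm h2, σ.symm h1⟩)
      · exact Or.inr (Or.inl ⟨σ.symm h2, σ.symm h1⟩),
    fun {x y z} h h' => by
      rcases h with h | ⟨h1, h2⟩ | ⟨h1, h2⟩ <;>
        rcases h' with h' | ⟨h1', h2'⟩ | ⟨h1', h2'⟩
      · exact Or.inl (σ.trans h h')
      · exact Or.inr (Or.inl ⟨σ.trans h h1', h2'⟩)
      · exact Or.inr (Or.inr ⟨σ.trans h h1', h2'⟩)
      · exact Or.inr (Or.inl ⟨h1, σ.trans h2 h'⟩)
      · exact Or.inl (σ.trans h1 (σ.trans (σ.symm (σ.trans h2 h1')) h2'))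
      · exact Or.inl (σ.trans h1 h2')
      · exact Or.inr (Or.inr ⟨h1, σ.trans h2 h'⟩)
      · exact Or.inl (σ.trans h1 h2')
      · exact Or.inl (σ.trans h1 (σ.trans (σ.symm (σ.trans h2 h1')) h2'))⟩⟩

theorem card_joinPair (σ : Setoid (Fin n)) (u v : Fin n) :
    Nat.card (Quotient σ) ≤ Nat.card (Quotient (joinPair σ u v)) + 1 := by
  classical
  have hinj : Function.Injective
      (fun a : Quotient σ =>
        if a = Quotient.mk σ v then (Sum.inr () : Quotient (joinPair σ u v) ⊕ Unit)
        else Sum.inl (Quotient.lift (fun x => Quotient.mk (joinPair σ u v) x)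
          (fun a b hab => Quotient.sound (Or.inl hab)) a)) := by
    intro a b hab
    induction a using Quotient.ind
    induction b using Quotient.ind
    rename_i x y
    by_cases hx : Quotient.mk σ x = Quotient.mk σ v <;>
      by_cases hy : Quotient.mk σ y = Quotient.mk σ v <;>
      simp only [hx, hy, if_pos, if_neg, if_true, if_false] at hab
    · exact hx.trans hy.symm
    · simp at hab
    · simp at hab
    · simp only [Sum.inl.injEq, Quotient.lift_mk] at hab
      have hj : joinPair σ u v x y := Quotient.exact hab
      rcases hj with h | ⟨h1, h2⟩ | ⟨h1, h2⟩
      · exact Quotient.sound h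
      · exact absurd (Quotient.sound (σ.symm h2)) hy
      · exact absurd (Quotient.sound h1) hx
  calc Nat.card (Quotient σ) ≤ Nat.card (Quotient (joinPair σ u v) ⊕ Unit) :=
        Nat.card_le_card_of_injective _ hinj
    _ = Nat.card (Quotient (joinPair σ u v)) + 1 := by
        rw [Nat.card_sum]; simp

theorem sameCycle_mul_swap_le_joinPair (p : Equiv.Perm (Fin n)) (u v : Fin n) :
    cycleSetoid (p * Equiv.swap u v) ≤ joinPair (cycleSetoid p) u v := by
  set q := p * Equiv.swap u v with hq
  have hstep : ∀ x : Fin n, joinPair (cycleSetoid p) u v x (q x) := by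
    intro x
    rcases eq_or_ne x u with rfl | hxu
    · have : q x = p v := by simp [hq, Equiv.Perm.mul_apply]
      rw [this]
      exact Or.inr (Or.inl ⟨(cycleSetoid p).refl x, ⟨1, by simp⟩⟩)
    rcases eq_or_ne x v with rfl | hxv
    · have : q x = p u := by simp [hq, Equiv.Perm.mul_apply]
      rw [this]
      exact Or.inr (Or.inr ⟨(cycleSetoid p).refl x, ⟨1, by simp⟩⟩)
    · have : q x = p x := by
        simp [hq, Equiv.Perm.mul_apply, Equiv.swap_apply_of_ne_of_ne hxu hxv]
      rw [this]
      exact Or.inl ⟨1, by simp⟩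
  refine Setoid.le_def.2 ?_
  intro x y hxy
  obtain ⟨k, -, hk⟩ := Equiv.Perm.SameCycle.exists_pow_eq' hxy
  subst hk
  clear hxy
  induction k with
  | zero => exact (joinPair (cycleSetoid p) u v).refl x
  | succ k ih =>
    have : (q ^ (k+1)) x = q ((q ^ k) x) := by rw [pow_succ' q k]; rfl
    rw [this]
    exact (joinPair (cycleSetoid p) u v).trans ih (hstep ((q ^ k) x))

theorem nOrb_le_nOrb_mul_swap_add_one (p : Equiv.Perm (Fin n)) (u v : Fin n) :
    nOrb p ≤ nOrb (p * Equiv.swap u v) + 1 := by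
  calc nOrb p ≤ Nat.card (Quotient (joinPair (cycleSetoid p) u v)) + 1 :=
        card_joinPair _ u v
    _ ≤ nOrb (p * Equiv.swap u v) + 1 := by
        have := nOrb_mono (q := p * Equiv.swap u v) (p := p)
        -- we need: card (Quot joinPair) ≤ card (Quot (cycleSetoid (p * swap)))
        have hsur : Nat.card (Quotient (joinPair (cycleSetoid p) u v)) ≤
            Nat.card (Quotient (cycleSetoid (p * Equiv.swap u v))) := by
          have hle := sameCycle_mul_swap_le_joinPair p u v
          have : Function.Surjective
              (Quotient.lift (fun x => (Quotient.mk (joinPair (cycleSetoid p) u v) x))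
                (fun a b hab => Quotient.sound (Setoid.le_def.1 hle hab)) :
                Quotient (cycleSetoid (p * Equiv.swap u v)) →
                  Quotient (joinPair (cycleSetoid p) u v)) := by
            intro b
            induction b using Quotient.ind
            exact ⟨Quotient.mk _ _, rfl⟩
          exact Nat.card_le_card_of_surjective _ this
        unfold nOrb
        omega
end counting

theorem sameCycle_swap_aux {n : ℕ} (p : Equiv.Perm (Fin n)) (u v : Fin n)
    (h : ¬ p.SameCycle u v) : (p * Equiv.swap u v).SameCycle u (p u) := by
  set q := p * Equiv.swap u v with hq
  have hord : 1 ≤ orderOf p := orderOf_pos p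
  have hex : ∃ m : ℕ, (p ^ m) (p u) = u := by
    refine ⟨orderOf p - 1, ?_⟩
    have : (p ^ (orderOf p - 1) * p) u = (p ^ orderOf p) u := by
      rw [← pow_succ, Nat.sub_add_cancel hord]
    rw [pow_orderOf_eq_one] at this
    simpa [Equiv.Perm.mul_apply] using this
  set m := Nat.find hex with hm
  have hfind : (p ^ m) (p u) = u := Nat.find_spec hex
  have hiter : ∀ j, j ≤ m → (q ^ j) (p u) = (p ^ j) (p u) := by
    intro j
    induction j with
    | zero => intro _; rfl
    | succ j ih =>
      intro hj
      have hj' : j < m := hj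
      have hne_u : (p ^ j) (p u) ≠ u := Nat.find_min hex hj'
      have hne_v : (p ^ j) (p u) ≠ v := by
        intro hcon
        refine h ⟨(j + 1 : ℕ), ?_⟩
        rw [zpow_natCast, pow_succ]
        simpa [Equiv.Perm.mul_apply] using hcon
      have e1 : (q ^ (j+1)) (p u) = q ((q ^ j) (p u)) := by
        rw [pow_succ' q j]; rfl
      rw [e1, ih (le_of_lt hj'), hq]
      have e2 : (p * Equiv.swap u v) ((p ^ j) (p u)) = p ((p ^ j) (p u)) := by
        rw [Equiv.Perm.mul_apply, Equiv.swap_apply_of_ne_of_ne hne_u hne_v]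
      rw [e2, pow_succ']
      rfl
  have : (q ^ m) (p u) = u := by rw [hiter m (le_refl m), hfind]
  have hsc : q.SameCycle (p u) u := ⟨(m : ℤ), by rw [zpow_natCast]; exact this⟩
  exact hsc.symm

theorem cycleSetoid_le_of_not_sameCycle {n : ℕ} {p : Equiv.Perm (Fin n)} {u v : Fin n}
    (h : ¬ p.SameCycle u v) :
    cycleSetoid p ≤ cycleSetoid (p * Equiv.swap u v) := by
  set q := p * Equiv.swap u v with hq
  have hstep : ∀ x : Fin n, q.SameCycle x (p x) := by
    intro x
    rcases eq_or_ne x u with rfl | hxu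
    · exact sameCycle_swap_aux p x v h
    rcases eq_or_ne x v with rfl | hxv
    · have h' : ¬ p.SameCycle x u := fun hc => h hc.symm
      have := sameCycle_swap_aux p x u h'
      rwa [Equiv.swap_comm, ← hq] at this
    · have : q x = p x := by
        rw [hq, Equiv.Perm.mul_apply, Equiv.swap_apply_of_ne_of_ne hxu hxv]
      exact ⟨1, by simp [this]⟩
  refine Setoid.le_def.2 ?_
  intro x y hxy
  obtain ⟨k, -, hk⟩ := Equiv.Perm.SameCycle.exists_pow_eq' hxy
  subst hk
  clear hxy
  induction k with
  | zero => exact Equiv.Perm.SameCycle.refl q x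
  | succ k ih =>
    have : (p ^ (k+1)) x = p ((p ^ k) x) := by rw [pow_succ' p k]; rfl
    rw [this]
    exact ih.trans (hstep ((p ^ k) x))

theorem nOrb_mul_swap_le_of_not_sameCycle {n : ℕ} {p : Equiv.Perm (Fin n)} {u v : Fin n}
    (h : ¬ p.SameCycle u v) : nOrb (p * Equiv.swap u v) ≤ nOrb p :=
  nOrb_mono (cycleSetoid_le_of_not_sameCycle h)

theorem nOrb_one {n : ℕ} : nOrb (1 : Equiv.Perm (Fin n)) = n := by
  have e : Quotient (cycleSetoid (1 : Equiv.Perm (Fin n))) ≃ Fin n :=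
    { toFun := Quotient.lift id (fun a b h => Equiv.Perm.sameCycle_one.1 h)
      invFun := Quotient.mk _
      left_inv := by
        intro a
        induction a using Quotient.ind
        rfl
      right_inv := fun x => rfl }
  rw [nOrb, Nat.card_congr e, Nat.card_eq_fintype_card, Fintype.card_fin]

theorem nOrb_finRotate {n : ℕ} (hn : 0 < n) : nOrb (finRotate n) = 1 := by
  rw [nOrb, Nat.card_eq_one_iff_unique]
  constructor
  · constructor
    intro a b
    induction a using Quotient.ind
    induction b using Quotient.ind
    exact Quotient.sound ((piPerm_sameCycle (isPiPerm_full)).1 trivial)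
  · exact ⟨Quotient.mk _ ⟨0, hn⟩⟩

section assembly
variable {n : ℕ}

theorem chain_exists (hn : 0 < n) (l : List (Equiv.Perm (Fin n)))
    (hsw : ∀ t ∈ l, t.IsSwap) (hlen : l.length = n - 1)
    (hprod : l.prod = finRotate n) :
    ∃ c : ℕ → NC n,
      (∀ i ≤ n - 1, IsPiPerm (c i).val ((l.take i).prod)) ∧
      c 0 = discNC n ∧ c (n - 1) = fullNC n ∧ (∀ i < n - 1, c i ⋖ c (i + 1)) := by
  classical
  set P : ℕ → Equiv.Perm (Fin n) := fun i => (l.take i).prod with hP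
  have hP0 : P 0 = 1 := by simp [hP]
  have hPn : P (n - 1) = finRotate n := by
    have : l.take (n - 1) = l := by
      rw [← hlen]; exact List.take_length
    simp [hP, this, hprod]
  have hPstep : ∀ i (hi : i < n - 1), P (i + 1) = P i * l.get ⟨i, by omega⟩ := by
    intro i hi
    exact List.prod_take_succ l i (by omega)
  -- lower bound on the number of orbits
  have hLB : ∀ i ≤ n - 1, n ≤ nOrb (P i) + i := by
    intro i
    induction i with
    | zero => intro _; simp [hP0, nOrb_one]
    | succ i ih =>
      intro hi
      have hi' : i < n - 1 := by omega
      obtain ⟨a, b, hab, ht⟩ := hsw (l.get ⟨i, by omega⟩) (l.get_mem _)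
      have h1 : nOrb (P i) ≤ nOrb (P (i + 1)) + 1 := by
        rw [hPstep i hi', ht]
        exact nOrb_le_nOrb_mul_swap_add_one (P i) a b
      have := ih (by omega)
      omega
  -- upper bound on the number of orbits
  have hUB : ∀ j i, i + j = n - 1 → nOrb (P i) ≤ j + 1 := by
    intro j
    induction j with
    | zero =>
      intro i hij
      have : i = n - 1 := by omega
      rw [this, hPn, nOrb_finRotate hn]
    | succ j ih =>
      intro i hij
      have hi' : i < n - 1 := by omega
      obtain ⟨a, b, hab, ht⟩ := hsw (l.get ⟨i, by omega⟩) (l.get_mem _)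
      have h1 : nOrb (P i) ≤ nOrb (P (i + 1)) + 1 := by
        rw [hPstep i hi', ht]
        exact nOrb_le_nOrb_mul_swap_add_one (P i) a b
      have h2 := ih (i + 1) (by omega)
      omega
  -- step lemma: the transposition joins two points of the same block
  have hstep : ∀ i (hi : i < n - 1) (τ : NC n), IsPiPerm τ.val (P (i + 1)) →
      ∀ u v : Fin n, u ≠ v → l.get ⟨i, by omega⟩ = Equiv.swap u v → τ.val u v := by
    intro i hi τ hτ u v huv ht
    by_contra hcon
    have hnsc : ¬ (P (i + 1)).SameCycle u v := fun h =>
      hcon ((piPerm_sameCycle hτ).2 h)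
    have h1 : nOrb (P (i + 1) * Equiv.swap u v) ≤ nOrb (P (i + 1)) :=
      nOrb_mul_swap_le_of_not_sameCycle hnsc
    have h2 : P (i + 1) * Equiv.swap u v = P i := by
      rw [hPstep i hi, ht, mul_assoc, Equiv.swap_mul_self, mul_one]
    rw [h2] at h1
    have h3 := hLB i (by omega)
    have h4 := hUB (n - 1 - (i + 1)) (i + 1) (by omega)
    omega
  -- existence of the noncrossing partitions along the chain
  have hEX : ∀ j i, i + j = n - 1 → ∃ σ : NC n, IsPiPerm σ.val (P i) := by
    intro j
    induction j with
    | zero =>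
      intro i hij
      have : i = n - 1 := by omega
      rw [this, hPn]
      exact ⟨fullNC n, isPiPerm_full⟩
    | succ j ih =>
      intro i hij
      have hi' : i < n - 1 := by omega
      obtain ⟨τ, hτ⟩ := ih (i + 1) (by omega)
      obtain ⟨a, b, hab, ht⟩ := hsw (l.get ⟨i, by omega⟩) (l.get_mem _)
      -- order the pair
      obtain ⟨u, v, huv, ht'⟩ : ∃ u v : Fin n, u < v ∧
          l.get ⟨i, by omega⟩ = Equiv.swap u v := by
        rcases lt_or_gt_of_ne hab with h | h
        · exact ⟨a, b, h, ht⟩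
        · exact ⟨b, a, h, by rw [ht, Equiv.swap_comm]⟩
      have hτuv : τ.val u v := hstep i hi' τ hτ u v (ne_of_lt huv) ht'
      refine ⟨⟨splitSetoid τ.val u v, splitSetoid_noncrossing τ.prop⟩, ?_⟩
      have hpi := isPiPerm_split hτ huv hτuv
      have heq : P (i + 1) * Equiv.swap u v = P i := by
        rw [hPstep i hi', ht', mul_assoc, Equiv.swap_mul_self, mul_one]
      rwa [heq] at hpi
  -- the chain
  set c : ℕ → NC n := fun i =>
    if h : i ≤ n - 1 then (hEX (n - 1 - i) i (by omega)).choose else fullNC n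
    with hc
  have hcspec : ∀ i ≤ n - 1, IsPiPerm (c i).val (P i) := by
    intro i hi
    simp only [hc, dif_pos hi]
    exact (hEX (n - 1 - i) i (by omega)).choose_spec
  refine ⟨c, hcspec, ?_, ?_, ?_⟩
  · have := hcspec 0 (by omega)
    rw [hP0] at this
    exact eq_disc_of_piPerm_one this
  · have := hcspec (n - 1) (le_refl _)
    rw [hPn] at this
    exact eq_full_of_piPerm_finRotate this
  · intro i hi
    have hτ := hcspec (i + 1) (by omega)
    obtain ⟨a, b, hab, ht⟩ := hsw (l.get ⟨i, by omega⟩) (l.get_mem _)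
    obtain ⟨u, v, huv, ht'⟩ : ∃ u v : Fin n, u < v ∧
        l.get ⟨i, by omega⟩ = Equiv.swap u v := by
      rcases lt_or_gt_of_ne hab with h | h
      · exact ⟨a, b, h, ht⟩
      · exact ⟨b, a, h, by rw [ht, Equiv.swap_comm]⟩
    have hτuv : (c (i + 1)).val u v := hstep i hi _ hτ u v (ne_of_lt huv) ht'
    have hpi := isPiPerm_split hτ huv hτuv
    have heq : P (i + 1) * Equiv.swap u v = P i := by
      rw [hPstep i hi, ht', mul_assoc, Equiv.swap_mul_self, mul_one]
    rw [heq] at hpi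
    have hval : (c i).val = splitSetoid (c (i + 1)).val u v :=
      piPerm_inj (hcspec i (by omega)) hpi
    exact split_covBy huv hτuv hval

end assembly

theorem label_prod {n : ℕ} (π : NC n → Equiv.Perm (Fin n)) (c : ℕ → NC n) (m : ℕ) :
    ((List.range m).map fun i => (π (c i))⁻¹ * π (c (i + 1))).prod
      = (π (c 0))⁻¹ * π (c m) := by
  induction m with
  | zero => simp
  | succ m ih =>
    rw [List.range_succ, List.map_append, List.prod_append, ih]
    simp [mul_assoc, mul_inv_cancel_left]


/-- Reading the transposition labels `t_i = π(σ_{i-1})⁻¹ π(σ_i)` of a maximal chain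
`σ_0 ⋖ σ_1 ⋖ ⋯ ⋖ σ_{n-1}` of `NC_n` (from bottom to top) gives a factorization of
the `n`-cycle `(1, 2, …, n)` (here `finRotate n`) as an ordered product of `n - 1`
transpositions, and this correspondence is a bijection between the maximal chains of
`NC_n` and such factorizations: every factorization arises from exactly one maximal
chain. -/
theorem NC_maximal_chains_biject_with_factorizations (n : ℕ) (hn : 0 < n)
    (π : NC n → Equiv.Perm (Fin n)) (hπ : ∀ σ : NC n, IsPiPerm σ.val (π σ)) :
    (∀ c : ℕ → NC n, c 0 = discNC n → c (n - 1) = fullNC n →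
      (∀ i < n - 1, c i ⋖ c (i + 1)) →
      (∀ t ∈ (List.range (n - 1)).map fun i => (π (c i))⁻¹ * π (c (i + 1)), t.IsSwap) ∧
      ((List.range (n - 1)).map fun i => (π (c i))⁻¹ * π (c (i + 1))).length = n - 1 ∧
      ((List.range (n - 1)).map fun i => (π (c i))⁻¹ * π (c (i + 1))).prod
        = finRotate n) ∧
    (∀ l : List (Equiv.Perm (Fin n)), (∀ t ∈ l, t.IsSwap) → l.length = n - 1 →
      l.prod = finRotate n →
      ∃ c : ℕ → NC n,
        (c 0 = discNC n ∧ c (n - 1) = fullNC n ∧ (∀ i < n - 1, c i ⋖ c (i + 1)) ∧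
          ((List.range (n - 1)).map fun i => (π (c i))⁻¹ * π (c (i + 1))) = l) ∧
        ∀ c' : ℕ → NC n,
          (c' 0 = discNC n ∧ c' (n - 1) = fullNC n ∧ (∀ i < n - 1, c' i ⋖ c' (i + 1)) ∧
            ((List.range (n - 1)).map fun i => (π (c' i))⁻¹ * π (c' (i + 1))) = l) →
          ∀ i ≤ n - 1, c' i = c i) := by
  constructor
  · -- forward direction
    intro c h0 hN hcov
    refine ⟨?_, by simp, ?_⟩
    · intro t ht
      rw [List.mem_map] at ht
      obtain ⟨i, hi, rfl⟩ := ht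
      rw [List.mem_range] at hi
      obtain ⟨u, v, huv, hrel, hvaleq⟩ := covBy_split (hcov i hi)
      have hpi : IsPiPerm (c i).val (π (c (i + 1)) * Equiv.swap u v) := by
        rw [hvaleq]
        exact isPiPerm_split (hπ (c (i + 1))) huv hrel
      have heq : π (c i) = π (c (i + 1)) * Equiv.swap u v :=
        piPerm_unique (hπ (c i)) hpi
      refine ⟨u, v, ne_of_lt huv, ?_⟩
      rw [heq, mul_inv_rev, Equiv.swap_inv, mul_assoc, inv_mul_cancel, mul_one]
    · rw [label_prod]
      have e0 : π (c 0) = 1 := by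
        rw [h0]
        exact piPerm_unique (hπ _) isPiPerm_disc
      have eN : π (c (n - 1)) = finRotate n := by
        rw [hN]
        exact piPerm_unique (hπ _) isPiPerm_full
      rw [e0, eN, inv_one, one_mul]
  · -- backward direction
    intro l hsw hlen hprod
    obtain ⟨c, hcspec, h0, hN, hcov⟩ := chain_exists hn l hsw hlen hprod
    have hπc : ∀ i ≤ n - 1, π (c i) = (l.take i).prod :=
      fun i hi => piPerm_unique (hπ (c i)) (hcspec i hi)
    have hlab : ((List.range (n - 1)).map fun i => (π (c i))⁻¹ * π (c (i + 1))) = l := by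
      refine List.ext_getElem (by simp [hlen]) ?_
      intro i h1 h2
      have hi : i < n - 1 := by simpa using h1
      simp only [List.getElem_map, List.getElem_range]
      rw [hπc i (by omega), hπc (i + 1) (by omega),
        List.prod_take_succ l i (by omega), inv_mul_cancel_left]
    refine ⟨c, ⟨h0, hN, hcov, hlab⟩, ?_⟩
    rintro c' ⟨h0', hN', hcov', hlab'⟩
    have key : ∀ i ≤ n - 1, π (c' i) = (l.take i).prod := by
      intro i
      induction i with
      | zero =>
        intro _
        simp only [List.take_zero, List.prod_nil]
        rw [h0']
        exact piPerm_unique (hπ _) isPiPerm_disc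
      | succ i ih =>
        intro hi
        have hi' : i < n - 1 := by omega
        have hil : i < l.length := by omega
        have e2 := List.getElem_of_eq hlab' (i := i)
          (by simp only [List.length_map, List.length_range]; omega)
        have e : l[i]'hil = (π (c' i))⁻¹ * π (c' (i + 1)) := by
          rw [← e2]
          simp
        rw [List.prod_take_succ l i hil, ← ih (by omega), e, mul_inv_cancel_left]
    intro i hi
    have hthis := hπ (c' i)
    rw [key i hi] at hthis
    exact Subtype.ext (piPerm_inj hthis (hcspec i hi))
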